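/- Let (A,d) be a nonempty compact metric space, and suppose the Minkowski dimension of A exists, i.e., lim_{ε→0⁺} log N(A,ε) / log(1/ε) = D, where N(A,ε) is the minimal number of closed ε-balls needed to cover A. Then lim_{t→∞} log(|tA|₊) / log t = D, where |tA|₊ denotes the maximum diversity of A with the metric t·d. -/

import Mathlib

open MeasureTheory Filter Topology

/-- The maximum diversity of the compact metric space `X` with its metric scaled by
`t`: the supremum over Borel probability measures `μ` of
`(∫∫ exp (-t d(a,b)) dμ dμ)⁻¹`. -/
noncomputable def maxDiv (X : Type*) [MetricSpace X] [MeasurableSpace X] (t : ℝ) : ℝ :=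
  sSup {r : ℝ | ∃ μ : Measure X, IsProbabilityMeasure μ ∧
    r = (∫ a, ∫ b, Real.exp (-(t * dist a b)) ∂μ ∂μ)⁻¹}


open scoped ENNReal NNReal

set_option linter.unusedSectionVars false
set_option linter.unusedVariables false
set_option maxHeartbeats 1000000

namespace Stmt18

lemma div_le_div_of_nonneg_right' {a b c : ℝ} (h : a ≤ b) (hc : 0 < c) : a / c ≤ b / c := by
  gcongr

/-- the purely real-analytic endgame -/
lemma endgame (A : ℝ → ℝ) (N : ℝ → ℕ) (D : ℝ)
    (hD : Tendsto (fun ε : ℝ => Real.log (N ε) / Real.log (1 / ε))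
      (nhdsWithin 0 (Set.Ioi 0)) (𝓝 D))
    (hNpos : ∀ ε : ℝ, 0 < ε → 0 < N ε)
    (hup : ∀ t ε : ℝ, 0 ≤ t → 0 < ε → A t ≤ (N ε : ℝ) * Real.exp (2 * t * ε))
    (hlo : ∀ t δ : ℝ, 0 ≤ t → 0 < δ → ((N δ : ℝ)⁻¹ + Real.exp (-(t * δ)))⁻¹ ≤ A t)
    (hpos : ∀ t : ℝ, 0 ≤ t → 0 < A t) :
    Tendsto (fun t : ℝ => Real.log (A t) / Real.log t) atTop (𝓝 D) := by
  -- notation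
  set δ : ℝ → ℝ := fun t => (Real.log t)^2 / t with hδdef
  -- basic limits
  have hlogtop : Tendsto Real.log atTop atTop := Real.tendsto_log_atTop
  have hloginv : Tendsto (fun t : ℝ => (Real.log t)⁻¹) atTop (𝓝 0) :=
    tendsto_inv_atTop_zero.comp hlogtop
  -- (b) δ t → 0 within Ioi 0
  have hδ0 : Tendsto δ atTop (𝓝[>] (0:ℝ)) := by
    rw [tendsto_nhdsWithin_iff]
    constructor
    · have := Real.tendsto_pow_log_div_mul_add_atTop 1 0 2 one_ne_zero
      simpa using this
    · filter_upwards [eventually_gt_atTop (1:ℝ)] with t ht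
      have h1 : 0 < Real.log t := Real.log_pos ht
      have : 0 < δ t := by
        rw [hδdef]
        positivity
      exact this
  -- (a') composition along 1/t
  have hOneDiv : Tendsto (fun t : ℝ => 1 / t) atTop (𝓝[>] (0:ℝ)) := by
    rw [tendsto_nhdsWithin_iff]
    refine ⟨by simpa using tendsto_inv_atTop_zero, ?_⟩
    filter_upwards [eventually_gt_atTop (0:ℝ)] with t ht
    exact Set.mem_Ioi.2 (by positivity)
  have ha : Tendsto (fun t : ℝ => Real.log (N (1/t)) / Real.log t) atTop (𝓝 D) := by
    have := hD.comp hOneDiv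
    refine this.congr' ?_
    filter_upwards [eventually_gt_atTop (0:ℝ)] with t ht
    simp only [Function.comp_apply, one_div_one_div]
  -- (c) F(δ t) → D
  have hc : Tendsto (fun t : ℝ => Real.log (N (δ t)) / Real.log (1 / δ t)) atTop (𝓝 D) :=
    hD.comp hδ0
  -- (d) log(1/δ t)/log t → 1
  have hloglog : Tendsto (fun t : ℝ => Real.log (Real.log t) / Real.log t) atTop (𝓝 0) := by
    have h1 : Tendsto (fun u : ℝ => Real.log u / u) atTop (𝓝 0) := by
      have := Real.tendsto_pow_log_div_mul_add_atTop 1 0 1 one_ne_zero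
      simpa using this
    exact (h1.comp hlogtop)
  have hd : Tendsto (fun t : ℝ => Real.log (1 / δ t) / Real.log t) atTop (𝓝 1) := by
    have key : (fun t : ℝ => Real.log (1 / δ t) / Real.log t) =ᶠ[atTop]
        (fun t : ℝ => 1 - 2 * (Real.log (Real.log t) / Real.log t)) := by
      filter_upwards [eventually_gt_atTop (Real.exp 1)] with t ht
      have ht1 : 1 < t := lt_trans (by nlinarith [Real.exp_one_gt_d9]) ht
      have hlt : 0 < Real.log t := Real.log_pos ht1
      have hδt : 0 < δ t := by rw [hδdef]; positivity
      have : Real.log (1 / δ t) = Real.log t - 2 * Real.log (Real.log t) := by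
        rw [one_div, Real.log_inv, hδdef]
        rw [Real.log_div (by positivity) (by positivity)]
        rw [Real.log_pow]
        push_cast
        ring
      rw [this]
      field_simp
    have : Tendsto (fun t : ℝ => 1 - 2 * (Real.log (Real.log t) / Real.log t)) atTop
        (𝓝 (1 - 2 * 0)) := by
      exact (tendsto_const_nhds.sub ((tendsto_const_nhds).mul hloglog))
    rw [show (1:ℝ) - 2 * 0 = 1 by ring] at this
    exact this.congr' key.symm
  -- (e) log N(δ t)/log t → D
  have he : Tendsto (fun t : ℝ => Real.log (N (δ t)) / Real.log t) atTop (𝓝 D) := by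
    have hmul := hc.mul hd
    rw [mul_one] at hmul
    refine hmul.congr' ?_
    have hδsmall : ∀ᶠ t : ℝ in atTop, δ t < 1 := by
      have := hδ0.mono_right nhdsWithin_le_nhds
      have := this.eventually (eventually_lt_nhds one_pos)
      exact this
    filter_upwards [hδsmall, hδ0.eventually (eventually_mem_nhdsWithin),
      eventually_gt_atTop (1:ℝ)] with t h1 h2 ht
    have hδt : 0 < δ t := h2
    have hlog1δ : 0 < Real.log (1 / δ t) := by
      apply Real.log_pos
      rw [one_div]
      exact (one_lt_inv₀ hδt).2 h1
    have hlt : 0 < Real.log t := Real.log_pos ht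
    field_simp
  -- (f) x t := N(δ t) * exp(-(log t)^2) → 0
  have hf : Tendsto (fun t : ℝ => (N (δ t) : ℝ) * Real.exp (-(Real.log t)^2)) atTop (𝓝 0) := by
    have hexp : Tendsto (fun t : ℝ => Real.exp ((D+1) * Real.log t - (Real.log t)^2)) atTop
        (𝓝 0) := by
      rw [Real.tendsto_exp_comp_nhds_zero]
      have : Tendsto (fun t : ℝ => Real.log t * ((D+1) - Real.log t)) atTop atBot := by
        apply Tendsto.atTop_mul_atBot₀ hlogtop
        have hneg : Tendsto (fun t : ℝ => -Real.log t) atTop atBot :=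
          tendsto_neg_atTop_atBot.comp hlogtop
        have := tendsto_atBot_add_const_left atTop (D+1) hneg
        refine this.congr (fun t => by ring)
      refine this.congr (fun t => by ring)
    refine tendsto_of_tendsto_of_tendsto_of_le_of_le' tendsto_const_nhds hexp ?_ ?_
    · filter_upwards [hδ0.eventually (eventually_mem_nhdsWithin)] with t h2
      have := hNpos _ (Set.mem_Ioi.1 h2)
      positivity
    · filter_upwards [he.eventually (eventually_le_nhds (by linarith : D < D + 1)),
        eventually_gt_atTop (1:ℝ), hδ0.eventually (eventually_mem_nhdsWithin)] with t h1 ht h2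
      have hlt : 0 < Real.log t := Real.log_pos ht
      have hNp : (0:ℝ) < (N (δ t) : ℝ) := by exact_mod_cast hNpos _ (Set.mem_Ioi.1 h2)
      have hlogN : Real.log (N (δ t)) ≤ (D + 1) * Real.log t := by
        rw [div_le_iff₀ hlt] at h1
        linarith
      have : (N (δ t) : ℝ) ≤ Real.exp ((D+1) * Real.log t) := by
        rw [← Real.exp_log hNp]
        exact Real.exp_le_exp.2 hlogN
      calc (N (δ t) : ℝ) * Real.exp (-(Real.log t)^2)
          ≤ Real.exp ((D+1) * Real.log t) * Real.exp (-(Real.log t)^2) :=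
            mul_le_mul_of_nonneg_right this (Real.exp_pos _).le
        _ = Real.exp ((D+1) * Real.log t - (Real.log t)^2) := by
            rw [← Real.exp_add]; ring_nf
  -- (f') log(1 + x t)/log t → 0
  have hf' : Tendsto (fun t : ℝ =>
      Real.log (1 + (N (δ t) : ℝ) * Real.exp (-(Real.log t)^2)) / Real.log t) atTop (𝓝 0) := by
    have hcont : Tendsto (fun t : ℝ =>
        Real.log (1 + (N (δ t) : ℝ) * Real.exp (-(Real.log t)^2))) atTop (𝓝 0) := by
      have h1 : Tendsto (fun t : ℝ => 1 + (N (δ t) : ℝ) * Real.exp (-(Real.log t)^2)) atTop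
          (𝓝 1) := by
        have h0 : Tendsto (fun _ : ℝ => (1:ℝ)) atTop (𝓝 1) := tendsto_const_nhds
        simpa using h0.add hf
      have := (Real.continuousAt_log (by norm_num : (1:ℝ) ≠ 0)).tendsto.comp h1
      simpa [Function.comp_def] using this
    have := hcont.mul hloginv
    simpa [div_eq_mul_inv] using this
  -- upper bound function tends to D
  have hu : Tendsto (fun t : ℝ => (2 + Real.log (N (1/t))) / Real.log t) atTop (𝓝 D) := by
    have h2 : Tendsto (fun t : ℝ => 2 * (Real.log t)⁻¹) atTop (𝓝 (2 * 0)) :=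
      tendsto_const_nhds.mul hloginv
    rw [mul_zero] at h2
    have := h2.add ha
    rw [zero_add] at this
    refine this.congr (fun t => ?_)
    rw [add_div]
    ring_nf
  -- lower bound function tends to D
  have hl : Tendsto (fun t : ℝ => Real.log (N (δ t)) / Real.log t -
      Real.log (1 + (N (δ t) : ℝ) * Real.exp (-(Real.log t)^2)) / Real.log t) atTop (𝓝 D) := by
    have := he.sub hf'
    rw [sub_zero] at this
    exact this
  -- eventual inequalities
  refine tendsto_of_tendsto_of_tendsto_of_le_of_le' hl hu ?_ ?_
  · -- lower
    filter_upwards [eventually_gt_atTop (1:ℝ), hδ0.eventually (eventually_mem_nhdsWithin)]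
      with t ht h2
    have hδt : 0 < δ t := h2
    have ht0 : (0:ℝ) ≤ t := by linarith
    have hlt : 0 < Real.log t := Real.log_pos ht
    have hNp : (0:ℝ) < (N (δ t) : ℝ) := by exact_mod_cast hNpos _ hδt
    have hA := hlo t (δ t) ht0 hδt
    have htδ : t * δ t = (Real.log t)^2 := by
      rw [hδdef]
      field_simp
    rw [htδ] at hA
    set x := (N (δ t) : ℝ) * Real.exp (-(Real.log t)^2) with hx
    have hxpos : 0 < x := by positivity
    have hkey : ((N (δ t) : ℝ)⁻¹ + Real.exp (-(Real.log t)^2)) = (1 + x) / (N (δ t) : ℝ) := by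
      rw [hx]
      field_simp
    have hBpos : (0:ℝ) < (N (δ t) : ℝ)⁻¹ + Real.exp (-(Real.log t)^2) := by positivity
    have hlogA : Real.log (N (δ t)) - Real.log (1 + x) ≤ Real.log (A t) := by
      have h3 : Real.log (((N (δ t) : ℝ)⁻¹ + Real.exp (-(Real.log t)^2))⁻¹) ≤ Real.log (A t) :=
        Real.log_le_log (by positivity) hA
      rw [Real.log_inv, hkey, Real.log_div (by positivity) (by positivity)] at h3
      linarith
    rw [div_sub_div_same]
    exact div_le_div_of_nonneg_right' hlogA hlt
  · -- upper
    filter_upwards [eventually_gt_atTop (1:ℝ)] with t ht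
    have ht0 : (0:ℝ) ≤ t := by linarith
    have ht0' : (0:ℝ) < t := by linarith
    have hlt : 0 < Real.log t := Real.log_pos ht
    have hA := hup t (1/t) ht0 (by positivity)
    have h2t : 2 * t * (1/t) = 2 := by field_simp
    rw [h2t] at hA
    have hNp : (0:ℝ) < (N (1/t) : ℝ) := by
      exact_mod_cast hNpos _ (by positivity : (0:ℝ) < 1/t)
    have hlogA : Real.log (A t) ≤ 2 + Real.log (N (1/t)) := by
      have h3 : Real.log (A t) ≤ Real.log ((N (1/t) : ℝ) * Real.exp 2) :=
        Real.log_le_log (hpos t ht0) hA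
      rw [Real.log_mul (by positivity) (Real.exp_ne_zero 2), Real.log_exp] at h3
      linarith
    exact div_le_div_of_nonneg_right' hlogA hlt


variable {X : Type*} [MetricSpace X] [CompactSpace X] [Nonempty X]
  [MeasurableSpace X] [BorelSpace X]

noncomputable def mker (X : Type*) [MetricSpace X] (t : ℝ) (p : X × X) : ℝ :=
  Real.exp (-(t * dist p.1 p.2))

lemma mker_cont (t : ℝ) : Continuous (mker X t) := by
  unfold mker; fun_prop

lemma mker_pos (t : ℝ) (p : X × X) : 0 < mker X t p := Real.exp_pos _

lemma mker_le_one {t : ℝ} (ht : 0 ≤ t) (p : X × X) : mker X t p ≤ 1 := by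
  rw [mker, Real.exp_le_one_iff, neg_nonpos]
  positivity

lemma mker_integrable {t : ℝ} (ht : 0 ≤ t) (μ : Measure X) [IsProbabilityMeasure μ] :
    Integrable (mker X t) (μ.prod μ) := by
  refine (integrable_const (1:ℝ)).mono' ((mker_cont t).aestronglyMeasurable) ?_
  filter_upwards with p
  rw [Real.norm_eq_abs, abs_of_pos (mker_pos t p)]
  exact mker_le_one ht p

lemma inner_cont (t : ℝ) (a : X) : Continuous (fun b => Real.exp (-(t * dist a b))) := by
  fun_prop

lemma inner_integrable {t : ℝ} (ht : 0 ≤ t) (μ : Measure X) [IsProbabilityMeasure μ] (a : X) :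
    Integrable (fun b => Real.exp (-(t * dist a b))) μ := by
  refine (integrable_const (1:ℝ)).mono' (inner_cont t a).aestronglyMeasurable ?_
  filter_upwards with b
  rw [Real.norm_eq_abs, abs_of_pos (Real.exp_pos _)]
  exact mker_le_one ht (a, b)

lemma I_eq {t : ℝ} (ht : 0 ≤ t) (μ : Measure X) [IsProbabilityMeasure μ] :
    ∫ a, ∫ b, Real.exp (-(t * dist a b)) ∂μ ∂μ = ∫ p, mker X t p ∂(μ.prod μ) :=
  MeasureTheory.integral_integral (mker_integrable ht μ)

lemma I_le_one {t : ℝ} (ht : 0 ≤ t) (μ : Measure X) [IsProbabilityMeasure μ] :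
    ∫ p, mker X t p ∂(μ.prod μ) ≤ 1 := by
  calc ∫ p, mker X t p ∂(μ.prod μ) ≤ ∫ _, (1:ℝ) ∂(μ.prod μ) :=
        integral_mono (mker_integrable ht μ) (integrable_const 1) (mker_le_one ht)
    _ = 1 := by simp


/-- Key lower bound on the double integral from a covering. -/
lemma J_ge {t ε : ℝ} (ht : 0 ≤ t) (hε : 0 < ε) (μ : Measure X) [IsProbabilityMeasure μ]
    (s : Finset X) (hcov : (Set.univ : Set X) ⊆ ⋃ x ∈ s, Metric.closedBall x ε) :
    Real.exp (-(2 * t * ε)) / s.card ≤ ∫ p, mker X t p ∂(μ.prod μ) := by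
  set n := s.card with hn
  have hn0 : 0 < n := by
    rcases Set.mem_iUnion₂.1 (hcov (Set.mem_univ (Classical.arbitrary X))) with ⟨x, hx, -⟩
    exact Finset.card_pos.2 ⟨x, hx⟩
  set e : Fin n ≃ {x // x ∈ s} := s.equivFin.symm with he
  set f : ℕ → Set X := fun k => if h : k < n then Metric.closedBall (e ⟨k, h⟩ : X) ε else ∅
    with hf
  have hfm : ∀ k, MeasurableSet (f k) := by
    intro k
    by_cases h : k < n
    · simp only [hf, dif_pos h]; exact Metric.isClosed_closedBall.measurableSet
    · simp only [hf, dif_neg h]; exact MeasurableSet.empty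
  set g : ℕ → Set X := disjointed f with hg
  have hgm : ∀ k, MeasurableSet (g k) := MeasurableSet.disjointed hfm
  have hgd : Pairwise (Function.onFun Disjoint g) := disjoint_disjointed f
  have hgu : ⋃ k, g k = Set.univ := by
    rw [hg, iUnion_disjointed]
    apply Set.eq_univ_of_univ_subset
    intro z hz
    rcases Set.mem_iUnion₂.1 (hcov hz) with ⟨x, hx, hzx⟩
    refine Set.mem_iUnion.2 ⟨(e.symm ⟨x, hx⟩ : Fin n), ?_⟩
    have : f (e.symm ⟨x, hx⟩ : Fin n) = Metric.closedBall x ε := by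
      simp only [hf, dif_pos (e.symm ⟨x, hx⟩).isLt, Fin.eta]
      rw [Equiv.apply_symm_apply]
    rw [this]; exact hzx
  have hgempty : ∀ k, n ≤ k → g k = ∅ := by
    intro k hk
    have : g k ⊆ f k := disjointed_le f k
    rw [hf] at this
    simp only [dif_neg (not_lt.2 hk)] at this
    exact Set.subset_empty_iff.1 this
  -- the union over range n already covers
  have hgu' : ⋃ k ∈ Finset.range n, g k = Set.univ := by
    apply Set.eq_univ_of_univ_subset
    rw [← hgu]
    intro z hz
    rcases Set.mem_iUnion.1 hz with ⟨k, hk⟩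
    have hkn : k < n := by
      by_contra h
      rw [hgempty k (not_lt.1 h)] at hk
      exact hk
    exact Set.mem_biUnion (Finset.mem_range.2 hkn) hk
  set m : ℕ → ℝ := fun k => (μ (g k)).toReal with hm
  have hsum : ∑ k ∈ Finset.range n, m k = 1 := by
    have := measure_biUnion_finset (μ := μ) (s := Finset.range n) (f := g)
      (fun i _ j _ hij => hgd hij) (fun k _ => hgm k)
    rw [hgu', measure_univ] at this
    have h1 : ((1 : ℝ≥0∞)).toReal = (∑ p ∈ Finset.range n, μ (g p)).toReal := by rw [← this]
    rw [ENNReal.toReal_sum (fun k _ => measure_ne_top μ _)] at h1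
    simpa [hm] using h1.symm
  -- each product set
  set S : ℕ → Set (X × X) := fun k => (g k) ×ˢ (g k) with hS
  have hSm : ∀ k, MeasurableSet (S k) := fun k => (hgm k).prod (hgm k)
  have hSd : (↑(Finset.range n) : Set ℕ).Pairwise (Function.onFun Disjoint S) := by
    intro i _ j _ hij
    have := hgd hij
    rw [Function.onFun, Set.disjoint_left] at this ⊢
    rintro ⟨a, b⟩ hab hab'
    exact this hab.1 hab'.1
  have hint := mker_integrable (X := X) ht μ
  have hptwise : ∀ k, ∀ p ∈ S k, Real.exp (-(2 * t * ε)) ≤ mker X t p := by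
    intro k p hp
    rcases hp with ⟨h1, h2⟩
    -- both p.1 p.2 in g k ⊆ f k ⊆ some closed ball
    have hsub : g k ⊆ f k := disjointed_le f k
    have hkn : k < n := by
      by_contra h
      have := hgempty k (not_lt.1 h)
      rw [this] at h1; exact h1
    have hb1 : p.1 ∈ Metric.closedBall (e ⟨k, hkn⟩ : X) ε := by
      have h := hsub h1
      simp only [hf, dif_pos hkn] at h
      exact h
    have hb2 : p.2 ∈ Metric.closedBall (e ⟨k, hkn⟩ : X) ε := by
      have h := hsub h2
      simp only [hf, dif_pos hkn] at h
      exact h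
    have hd : dist p.1 p.2 ≤ 2 * ε := by
      calc dist p.1 p.2 ≤ dist p.1 (e ⟨k, hkn⟩ : X) + dist (e ⟨k, hkn⟩ : X) p.2 :=
            dist_triangle _ _ _
        _ ≤ ε + ε := add_le_add (Metric.mem_closedBall.1 hb1)
            (by rw [dist_comm]; exact Metric.mem_closedBall.1 hb2)
        _ = 2 * ε := by ring
    rw [mker, Real.exp_le_exp, neg_le_neg_iff]
    calc t * dist p.1 p.2 ≤ t * (2 * ε) := by
          apply mul_le_mul_of_nonneg_left hd ht
      _ = 2 * t * ε := by ring
  have hSk : ∀ k, Real.exp (-(2 * t * ε)) * (m k)^2 ≤ ∫ p in S k, mker X t p ∂(μ.prod μ) := by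
    intro k
    have hμS : (μ.prod μ) (S k) = μ (g k) * μ (g k) := Measure.prod_prod _ _
    have hne : (μ.prod μ) (S k) ≠ ⊤ := by
      rw [hμS]
      exact ENNReal.mul_ne_top (measure_ne_top _ _) (measure_ne_top _ _)
    have := setIntegral_ge_of_const_le (hSm k) hne (hptwise k) hint.integrableOn
    calc Real.exp (-(2 * t * ε)) * (m k)^2
        = Real.exp (-(2 * t * ε)) * ((μ.prod μ) (S k)).toReal := by
          rw [hμS, ENNReal.toReal_mul, hm]; ring
      _ ≤ _ := by rw [smul_eq_mul, mul_comm] at this; exact this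
  have hstep : ∑ k ∈ Finset.range n, ∫ p in S k, mker X t p ∂(μ.prod μ)
      ≤ ∫ p, mker X t p ∂(μ.prod μ) := by
    rw [← integral_biUnion_finset (Finset.range n) (fun k _ => hSm k) hSd
      (fun k _ => hint.integrableOn)]
    exact setIntegral_le_integral hint
      (Filter.Eventually.of_forall (fun p => (mker_pos t p).le))
  have hCS : (1:ℝ)/n ≤ ∑ k ∈ Finset.range n, (m k)^2 := by
    have := sq_sum_le_card_mul_sum_sq (s := Finset.range n) (f := m)
    rw [hsum, one_pow, Finset.card_range] at this
    rw [div_le_iff₀ (by exact_mod_cast hn0)]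
    calc (1:ℝ) ≤ n * ∑ k ∈ Finset.range n, (m k)^2 := this
      _ = (∑ k ∈ Finset.range n, (m k)^2) * n := by ring
  calc Real.exp (-(2 * t * ε)) / n = Real.exp (-(2*t*ε)) * ((1:ℝ)/n) := by ring
    _ ≤ Real.exp (-(2*t*ε)) * ∑ k ∈ Finset.range n, (m k)^2 :=
        mul_le_mul_of_nonneg_left hCS (Real.exp_pos _).le
    _ = ∑ k ∈ Finset.range n, Real.exp (-(2*t*ε)) * (m k)^2 := by
        rw [Finset.mul_sum]
    _ ≤ ∑ k ∈ Finset.range n, ∫ p in S k, mker X t p ∂(μ.prod μ) :=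
        Finset.sum_le_sum (fun k _ => hSk k)
    _ ≤ _ := hstep


lemma integrable_of_le_one {μ : Measure X} [IsFiniteMeasure μ] {f : X → ℝ}
    (hm : AEStronglyMeasurable f μ) (h0 : ∀ x, 0 ≤ f x) (h1 : ∀ x, f x ≤ 1) :
    Integrable f μ := by
  refine (integrable_const (1:ℝ)).mono' hm ?_
  filter_upwards with x
  rw [Real.norm_eq_abs, abs_of_nonneg (h0 x)]
  exact h1 x

noncomputable def unifMeasureX (s : Finset X) : Measure X :=
  ((s.card : ℝ≥0∞))⁻¹ • ∑ x ∈ s, MeasureTheory.Measure.dirac x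

lemma unifMeasureX_prob (s : Finset X) (h : 0 < s.card) :
    IsProbabilityMeasure (unifMeasureX s) := by
  constructor
  simp [unifMeasureX, Measure.smul_apply, Measure.coe_finset_sum, Finset.sum_apply]
  rw [ENNReal.inv_mul_cancel] <;> simp [h.ne']

lemma integral_unifMeasureX (s : Finset X) (h : 0 < s.card) {f : X → ℝ}
    (hm : AEStronglyMeasurable f (∑ x ∈ s, MeasureTheory.Measure.dirac x))
    (h0 : ∀ x, 0 ≤ f x) (h1 : ∀ x, f x ≤ 1) :
    ∫ x, f x ∂(unifMeasureX s) = (s.card : ℝ)⁻¹ * ∑ x ∈ s, f x := by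
  have hintd : ∀ x ∈ s, Integrable f (Measure.dirac x) := by
    intro x _
    refine integrable_of_le_one (hm.mono_measure ?_) h0 h1
    refine Measure.le_iff'.2 (fun A => ?_)
    rw [Measure.finset_sum_apply]
    exact Finset.single_le_sum (f := fun y => Measure.dirac y A) (fun i _ => zero_le) ‹x ∈ s›
  rw [unifMeasureX, integral_smul_measure, integral_finset_sum_measure hintd]
  congr 1
  · simp
  · exact Finset.sum_congr rfl (fun x hx => integral_dirac f x)

lemma I_unif {t : ℝ} (ht : 0 ≤ t) (s : Finset X) (h : 0 < s.card) :
    ∫ a, ∫ b, Real.exp (-(t * dist a b)) ∂(unifMeasureX s) ∂(unifMeasureX s)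
      = (s.card : ℝ)⁻¹ * ∑ x ∈ s, ((s.card : ℝ)⁻¹ * ∑ y ∈ s, Real.exp (-(t * dist x y))) := by
  have hbd : ∀ (a b : X), Real.exp (-(t * dist a b)) ≤ 1 := by
    intro a b
    rw [Real.exp_le_one_iff, neg_nonpos]
    positivity
  have hin : ∀ a : X, ∫ b, Real.exp (-(t * dist a b)) ∂(unifMeasureX s)
      = (s.card : ℝ)⁻¹ * ∑ y ∈ s, Real.exp (-(t * dist a y)) := by
    intro a
    exact integral_unifMeasureX s h (Continuous.aestronglyMeasurable (by fun_prop))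
      (fun b => (Real.exp_pos _).le) (fun b => hbd a b)
  rw [show (fun a => ∫ b, Real.exp (-(t * dist a b)) ∂(unifMeasureX s))
      = (fun a => (s.card : ℝ)⁻¹ * ∑ y ∈ s, Real.exp (-(t * dist a y))) from funext hin]
  refine integral_unifMeasureX s h (Continuous.aestronglyMeasurable (by fun_prop)) ?_ ?_
  · intro a
    positivity
  · intro a
    calc (s.card : ℝ)⁻¹ * ∑ y ∈ s, Real.exp (-(t * dist a y))
        ≤ (s.card : ℝ)⁻¹ * ∑ y ∈ s, 1 := by
          apply mul_le_mul_of_nonneg_left (Finset.sum_le_sum (fun y _ => hbd a y))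
          positivity
      _ = 1 := by
          rw [Finset.sum_const, nsmul_eq_mul, mul_one, inv_mul_cancel₀]
          exact_mod_cast h.ne'

lemma I_unif_le [DecidableEq X] {t δ : ℝ} (ht : 0 ≤ t) (hδ : 0 < δ) (s : Finset X) (h : 0 < s.card)
    (hsep : ∀ x ∈ s, ∀ y ∈ s, x ≠ y → δ < dist x y) :
    ∫ a, ∫ b, Real.exp (-(t * dist a b)) ∂(unifMeasureX s) ∂(unifMeasureX s)
      ≤ (s.card : ℝ)⁻¹ + Real.exp (-(t * δ)) := by
  rw [I_unif ht s h]
  set M := (s.card : ℝ) with hM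
  have hM0 : (0:ℝ) < M := by rw [hM]; exact_mod_cast h
  have hrow : ∀ x ∈ s, ∑ y ∈ s, Real.exp (-(t * dist x y)) ≤ 1 + M * Real.exp (-(t * δ)) := by
    intro x hx
    rw [← Finset.add_sum_erase s _ hx]
    have h1 : Real.exp (-(t * dist x x)) = 1 := by simp
    rw [h1]
    have h2 : ∑ y ∈ s.erase x, Real.exp (-(t * dist x y))
        ≤ ∑ y ∈ s.erase x, Real.exp (-(t * δ)) := by
      refine Finset.sum_le_sum (fun y hy => ?_)
      rw [Real.exp_le_exp, neg_le_neg_iff]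
      have := hsep x hx y (Finset.mem_of_mem_erase hy) (Finset.ne_of_mem_erase hy).symm
      exact mul_le_mul_of_nonneg_left this.le ht
    refine add_le_add le_rfl (h2.trans ?_)
    rw [Finset.sum_const, nsmul_eq_mul]
    refine mul_le_mul_of_nonneg_right ?_ (Real.exp_pos _).le
    calc ((s.erase x).card : ℝ) ≤ (s.card : ℝ) := by
          exact_mod_cast Finset.card_le_card (Finset.erase_subset _ _)
      _ = M := rfl
  calc M⁻¹ * ∑ x ∈ s, (M⁻¹ * ∑ y ∈ s, Real.exp (-(t * dist x y)))
      ≤ M⁻¹ * ∑ x ∈ s, (M⁻¹ * (1 + M * Real.exp (-(t * δ)))) := by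
        refine mul_le_mul_of_nonneg_left (Finset.sum_le_sum (fun x hx => ?_)) (by positivity)
        exact mul_le_mul_of_nonneg_left (hrow x hx) (by positivity)
    _ = (s.card : ℝ)⁻¹ + Real.exp (-(t * δ)) := by
        rw [Finset.sum_const, nsmul_eq_mul]
        field_simp
        ring

/-- existence of a maximal packing which is also a covering -/
lemma packing_exists (N : ℝ → ℕ)
    (hN : ∀ ε : ℝ, 0 < ε →
      (∃ s : Finset X, s.card = N ε ∧
        (Set.univ : Set X) ⊆ ⋃ x ∈ s, Metric.closedBall x ε) ∧
      (∀ s : Finset X, (Set.univ : Set X) ⊆ ⋃ x ∈ s, Metric.closedBall x ε →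
        N ε ≤ s.card))
    {δ : ℝ} (hδ : 0 < δ) :
    ∃ s : Finset X, (∀ x ∈ s, ∀ y ∈ s, x ≠ y → δ < dist x y) ∧
      (Set.univ : Set X) ⊆ ⋃ x ∈ s, Metric.closedBall x δ ∧
      N δ ≤ s.card ∧ 0 < s.card := by
  classical
  obtain ⟨⟨c, hccard, hccov⟩, -⟩ := hN (δ/2) (by linarith)
  set Sep : Finset X → Prop := fun s => ∀ x ∈ s, ∀ y ∈ s, x ≠ y → δ < dist x y with hSep
  -- cards of separated sets are bounded by c.card
  have hbound : ∀ s : Finset X, Sep s → s.card ≤ c.card := by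
    intro s hs
    -- map each point of s to a center of c whose ball contains it
    have hmap : ∀ x ∈ s, ∃ z ∈ c, x ∈ Metric.closedBall z (δ/2) := by
      intro x _
      rcases Set.mem_iUnion₂.1 (hccov (Set.mem_univ x)) with ⟨z, hz, hxz⟩
      exact ⟨z, hz, hxz⟩
    choose φ hφc hφd using hmap
    refine Finset.card_le_card_of_injOn (fun x => if hx : x ∈ s then φ x hx else x) ?_ ?_
    · intro x hx
      simp only [dif_pos hx]
      have hx' : x ∈ s := hx
      simpa [dif_pos hx'] using hφc x hx'
    · intro x hx y hy hxy
      simp only [Finset.mem_coe] at hx hy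
      simp only [dif_pos hx, dif_pos hy] at hxy
      by_contra hne
      have hd : δ < dist x y := hs x hx y hy hne
      have : dist x y ≤ δ := by
        calc dist x y ≤ dist x (φ x hx) + dist (φ x hx) y := dist_triangle _ _ _
          _ ≤ δ/2 + δ/2 := by
              refine add_le_add (Metric.mem_closedBall.1 (hφd x hx)) ?_
              rw [hxy, dist_comm]
              exact Metric.mem_closedBall.1 (hφd y hy)
          _ = δ := by ring
      linarith
  set T : Set ℕ := {n | ∃ s : Finset X, Sep s ∧ s.card = n} with hT
  have hTne : T.Nonempty := ⟨0, ∅, by intro x hx; simp at hx, rfl⟩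
  have hTbdd : BddAbove T := by
    refine ⟨c.card, fun n hn => ?_⟩
    rcases hn with ⟨s, hs, rfl⟩
    exact hbound s hs
  obtain ⟨s, hsSep, hscard⟩ := Nat.sSup_mem hTne hTbdd
  -- s is maximal: every point is within δ of s
  have hmax : ∀ z : X, ∃ y ∈ s, dist z y ≤ δ := by
    intro z
    by_contra hcon
    push_neg at hcon
    have hzs : z ∉ s := by
      intro hz
      have := hcon z hz
      rw [dist_self] at this
      linarith
    have hins : Sep (insert z s) := by
      intro x hx y hy hxy
      rcases Finset.mem_insert.1 hx with rfl | hx' <;>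
        rcases Finset.mem_insert.1 hy with rfl | hy'
      · exact absurd rfl hxy
      · exact hcon y hy'
      · rw [dist_comm]; exact hcon x hx'
      · exact hsSep x hx' y hy' hxy
    have : (insert z s).card ∈ T := ⟨insert z s, hins, rfl⟩
    have hle := le_csSup hTbdd this
    rw [Finset.card_insert_of_notMem hzs, hscard] at hle
    omega
  have hcov : (Set.univ : Set X) ⊆ ⋃ x ∈ s, Metric.closedBall x δ := by
    intro z _
    rcases hmax z with ⟨y, hy, hzy⟩
    exact Set.mem_biUnion hy (Metric.mem_closedBall.2 hzy)
  have hNle : N δ ≤ s.card := (hN δ hδ).2 s hcov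
  have hpos : 0 < s.card := by
    rcases Set.mem_iUnion₂.1 (hcov (Set.mem_univ (Classical.arbitrary X))) with ⟨x, hx, -⟩
    exact Finset.card_pos.2 ⟨x, hx⟩
  exact ⟨s, hsSep, hcov, hNle, hpos⟩


section MaxDiv

variable (N : ℝ → ℕ)
    (hN : ∀ ε : ℝ, 0 < ε →
      (∃ s : Finset X, s.card = N ε ∧
        (Set.univ : Set X) ⊆ ⋃ x ∈ s, Metric.closedBall x ε) ∧
      (∀ s : Finset X, (Set.univ : Set X) ⊆ ⋃ x ∈ s, Metric.closedBall x ε →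
        N ε ≤ s.card))

include hN

lemma Npos {ε : ℝ} (hε : 0 < ε) : 0 < N ε := by
  obtain ⟨⟨s, hcard, hcov⟩, -⟩ := hN ε hε
  rcases Set.mem_iUnion₂.1 (hcov (Set.mem_univ (Classical.arbitrary X))) with ⟨x, hx, -⟩
  rw [← hcard]
  exact Finset.card_pos.2 ⟨x, hx⟩

/-- every element of the maxDiv set is bounded -/
lemma elem_le {t ε : ℝ} (ht : 0 ≤ t) (hε : 0 < ε) {r : ℝ}
    (hr : r ∈ {r : ℝ | ∃ μ : Measure X, IsProbabilityMeasure μ ∧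
      r = (∫ a, ∫ b, Real.exp (-(t * dist a b)) ∂μ ∂μ)⁻¹}) :
    r ≤ (N ε : ℝ) * Real.exp (2 * t * ε) := by
  obtain ⟨μ, hμ, rfl⟩ := hr
  obtain ⟨⟨s, hcard, hcov⟩, -⟩ := hN ε hε
  have hJ := J_ge ht hε μ s hcov
  rw [← I_eq ht μ] at hJ
  rw [hcard] at hJ
  have hNpos : (0:ℝ) < (N ε : ℝ) := by exact_mod_cast Npos N hN hε
  have hpos : (0:ℝ) < Real.exp (-(2 * t * ε)) / (N ε : ℝ) := by positivity
  calc (∫ a, ∫ b, Real.exp (-(t * dist a b)) ∂μ ∂μ)⁻¹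
      ≤ (Real.exp (-(2 * t * ε)) / (N ε : ℝ))⁻¹ :=
        inv_anti₀ hpos hJ
    _ = (N ε : ℝ) * Real.exp (2 * t * ε) := by
        rw [Real.exp_neg]
        field_simp

lemma maxDiv_bddAbove {t : ℝ} (ht : 0 ≤ t) :
    BddAbove {r : ℝ | ∃ μ : Measure X, IsProbabilityMeasure μ ∧
      r = (∫ a, ∫ b, Real.exp (-(t * dist a b)) ∂μ ∂μ)⁻¹} :=
  ⟨(N 1 : ℝ) * Real.exp (2 * t * 1), fun r hr => elem_le N hN ht one_pos hr⟩

lemma maxDiv_le {t ε : ℝ} (ht : 0 ≤ t) (hε : 0 < ε) :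
    _root_.maxDiv X t ≤ (N ε : ℝ) * Real.exp (2 * t * ε) := by
  apply csSup_le
  · refine ⟨(∫ a, ∫ b, Real.exp (-(t * dist a b))
      ∂(Measure.dirac (Classical.arbitrary X)) ∂(Measure.dirac (Classical.arbitrary X)))⁻¹,
      Measure.dirac (Classical.arbitrary X), by infer_instance, rfl⟩
  · exact fun r hr => elem_le N hN ht hε hr

lemma maxDiv_ge {t δ : ℝ} (ht : 0 ≤ t) (hδ : 0 < δ) :
    ((N δ : ℝ)⁻¹ + Real.exp (-(t * δ)))⁻¹ ≤ _root_.maxDiv X t := by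
  classical
  obtain ⟨s, hsep, hcov, hNle, hpos⟩ := packing_exists N hN hδ
  haveI := unifMeasureX_prob s hpos
  set μ := unifMeasureX s with hμ
  set I := ∫ a, ∫ b, Real.exp (-(t * dist a b)) ∂μ ∂μ with hI
  have hIpos : 0 < I := by
    have hJ := J_ge ht hδ μ s hcov
    rw [← I_eq ht μ, ← hI] at hJ
    have : (0:ℝ) < Real.exp (-(2 * t * δ)) / s.card := by positivity
    linarith
  have hIle : I ≤ (s.card : ℝ)⁻¹ + Real.exp (-(t * δ)) := I_unif_le ht hδ s hpos hsep
  have hmem : I⁻¹ ∈ {r : ℝ | ∃ μ : Measure X, IsProbabilityMeasure μ ∧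
      r = (∫ a, ∫ b, Real.exp (-(t * dist a b)) ∂μ ∂μ)⁻¹} := ⟨μ, by infer_instance, rfl⟩
  have h1 : ((N δ : ℝ)⁻¹ + Real.exp (-(t * δ)))⁻¹ ≤ I⁻¹ := by
    apply inv_anti₀ hIpos
    refine hIle.trans (add_le_add ?_ le_rfl)
    apply inv_anti₀
    · exact_mod_cast Npos N hN hδ
    · exact_mod_cast hNle
  exact h1.trans (le_csSup (maxDiv_bddAbove N hN ht) hmem)

lemma maxDiv_pos {t δ : ℝ} (ht : 0 ≤ t) (hδ : 0 < δ) : 0 < _root_.maxDiv X t := by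
  have h := maxDiv_ge N hN ht hδ
  have hNpos : (0:ℝ) < (N δ : ℝ) := by exact_mod_cast Npos N hN hδ
  have : (0:ℝ) < ((N δ : ℝ)⁻¹ + Real.exp (-(t * δ)))⁻¹ := by positivity
  linarith

end MaxDiv

end Stmt18

/-- If a nonempty compact metric space `X` has Minkowski dimension `D`
(i.e. `log N(X,ε) / log (1/ε) → D` as `ε → 0⁺`, where `N(X,ε)` is the minimal number
of closed `ε`-balls covering `X`), then `log |tX|₊ / log t → D` as `t → ∞`, where
`|tX|₊` is the maximum diversity of `X` with metric scaled by `t`. -/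
theorem stmt_18 {X : Type*} [MetricSpace X] [CompactSpace X] [Nonempty X]
    [MeasurableSpace X] [BorelSpace X]
    (N : ℝ → ℕ)
    (hN : ∀ ε : ℝ, 0 < ε →
      (∃ s : Finset X, s.card = N ε ∧
        (Set.univ : Set X) ⊆ ⋃ x ∈ s, Metric.closedBall x ε) ∧
      (∀ s : Finset X, (Set.univ : Set X) ⊆ ⋃ x ∈ s, Metric.closedBall x ε →
        N ε ≤ s.card))
    (D : ℝ)
    (hD : Tendsto (fun ε : ℝ => Real.log (N ε) / Real.log (1 / ε))
      (nhdsWithin 0 (Set.Ioi 0)) (𝓝 D)) :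
    Tendsto (fun t : ℝ => Real.log (maxDiv X t) / Real.log t) atTop (𝓝 D) := by
  exact Stmt18.endgame (maxDiv X) N D hD
    (fun ε hε => Stmt18.Npos (X := X) N hN hε)
    (fun t ε ht hε => Stmt18.maxDiv_le N hN ht hε)
    (fun t δ ht hδ => Stmt18.maxDiv_ge N hN ht hδ)
    (fun t ht => Stmt18.maxDiv_pos N hN ht one_pos)
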